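/- arXiv:1011.2888 — 3 statements merged into one kernel-verified Lean document; each statement's English description precedes it below -/
import Mathlib

section
/- Let γ_n denote the maximum cardinality of a peak-pit domain in L([n]). Then for all n, n' ≥ 1, γ_n · γ_{n'} ≤ γ_{n+n'}. -/
/-- The set of linear orders on `{1,…,n}`, encoded as words (lists) listing the
alternatives from worst to best; such a word is a permutation of `1,2,…,n`. -/
def LinWords (n : ℕ) : Set (List ℕ) := {l | l.Perm (List.range' 1 n)}

/-- Linear orders on a finite ground set `X ⊆ ℕ`, encoded as words. -/
def LinWordsOn (X : Finset ℕ) : Set (List ℕ) := {l | l.Perm (X.sort (· ≤ ·))}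

/-- `ltIn σ i j` : `i` occurs before (i.e. is worse than) `j` in the word `σ`;
this is the relation `i <_σ j`. -/
def ltIn (σ : List ℕ) (i j : ℕ) : Prop := σ.idxOf i < σ.idxOf j

instance (σ : List ℕ) (i j : ℕ) : Decidable (ltIn σ i j) :=
  inferInstanceAs (Decidable (σ.idxOf i < σ.idxOf j))

/-- Three orders in `D` whose restrictions to `{i,j,k}` are exactly the three
cyclic patterns `i<j<k`, `j<k<i`, `k<i<j`. -/
def CyclicTriple (D : Set (List ℕ)) (i j k : ℕ) : Prop :=
  ∃ σ₁ ∈ D, ∃ σ₂ ∈ D, ∃ σ₃ ∈ D,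
    (ltIn σ₁ i j ∧ ltIn σ₁ j k) ∧ (ltIn σ₂ j k ∧ ltIn σ₂ k i) ∧ (ltIn σ₃ k i ∧ ltIn σ₃ i j)

/-- `D` is cyclic: some three distinct alternatives and three orders of `D`
restrict to `{i,j,k}` as `{ijk, jki, kij}` or as `{kji, jik, ikj}`. -/
def IsCyclicDom (D : Set (List ℕ)) : Prop :=
  ∃ i j k : ℕ, i ≠ j ∧ j ≠ k ∧ i ≠ k ∧ (CyclicTriple D i j k ∨ CyclicTriple D k j i)

/-- On the triple `i<j<k`, in every order of `D` the alternative `j` is never the worst. -/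
def PeakCond (D : Set (List ℕ)) (i j k : ℕ) : Prop :=
  ∀ σ ∈ D, ¬ (ltIn σ j i ∧ ltIn σ j k)

/-- On the triple `i<j<k`, in every order of `D` the alternative `j` is never the best. -/
def PitCond (D : Set (List ℕ)) (i j k : ℕ) : Prop :=
  ∀ σ ∈ D, ¬ (ltIn σ i j ∧ ltIn σ k j)

/-- `D` is a peak-pit domain: every triple `i<j<k` in `[n]` satisfies the peak
condition or the pit condition. -/
def IsPeakPit (n : ℕ) (D : Set (List ℕ)) : Prop :=
  ∀ i j k : ℕ, 1 ≤ i → i < j → j < k → k ≤ n → (PeakCond D i j k ∨ PitCond D i j k)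

/-- The four symbols a casting can assign to a triple. -/
inductive Symb | peak | pit | right | left

/-- Membership of (the restriction of) `σ` in the four-element domain `D₃(s)` on
the triple `i<j<k`: for `∩`, `j` is not worst; for `∪`, `j` is not best; for `→`,
`k` is not middle; for `←`, `i` is not middle. -/
def TripleCond : Symb → List ℕ → ℕ → ℕ → ℕ → Prop
  | Symb.peak, σ, i, j, k => ¬ (ltIn σ j i ∧ ltIn σ j k)
  | Symb.pit,  σ, i, j, k => ¬ (ltIn σ i j ∧ ltIn σ k j)
  | Symb.right, σ, i, j, k => ¬ ((ltIn σ i k ∧ ltIn σ k j) ∨ (ltIn σ j k ∧ ltIn σ k i))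
  | Symb.left,  σ, i, j, k => ¬ ((ltIn σ j i ∧ ltIn σ i k) ∨ (ltIn σ k i ∧ ltIn σ i j))

/-- The domain `D(c)` of a casting `c`: all linear orders on `[n]` whose restriction
to every triple `i<j<k` lies in `D₃(c i j k)`. -/
def CastDomain (n : ℕ) (c : ℕ → ℕ → ℕ → Symb) : Set (List ℕ) :=
  {σ | σ ∈ LinWords n ∧ ∀ i j k : ℕ, 1 ≤ i → i < j → j < k → k ≤ n → TripleCond (c i j k) σ i j k}

/-- The set of inversions of a word `σ`: pairs `(i,j)` of alternatives of `σ`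
with `i < j` as integers and `j <_σ i`. -/
def InvPairs (σ : List ℕ) : Set (ℕ × ℕ) :=
  {p | p.1 ∈ σ ∧ p.2 ∈ σ ∧ p.1 < p.2 ∧ ltIn σ p.2 p.1}

/-- `τ` covers `σ` in the weak Bruhat order: `InvPairs τ` is `InvPairs σ` plus exactly one pair. -/
def Covers (τ σ : List ℕ) : Prop :=
  ∃ p : ℕ × ℕ, p ∉ InvPairs σ ∧ InvPairs τ = insert p (InvPairs σ)

/-- Adjacency in the Bruhat graph. -/
def BruhatAdj (σ τ : List ℕ) : Prop := Covers τ σ ∨ Covers σ τ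

/-- A path in the Bruhat graph from `σ` to `τ` all of whose vertices lie in `D`. -/
def PathIn (D : Set (List ℕ)) (σ τ : List ℕ) : Prop :=
  ∃ (m : ℕ) (f : ℕ → List ℕ), f 0 = σ ∧ f m = τ ∧
    (∀ t ≤ m, f t ∈ D) ∧ ∀ t < m, BruhatAdj (f t) (f (t + 1))

/-- `D` is semi-connected (ground set `[n]`): it contains the increasing order `α`
and the decreasing order `ω` and a Bruhat path from `α` to `ω` inside `D`. -/
def SemiConnected (n : ℕ) (D : Set (List ℕ)) : Prop :=
  List.range' 1 n ∈ D ∧ (List.range' 1 n).reverse ∈ D ∧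
    PathIn D (List.range' 1 n) (List.range' 1 n).reverse

/-- `D` is semi-connected on the ground set `X`. -/
def SemiConnectedOn (X : Finset ℕ) (D : Set (List ℕ)) : Prop :=
  X.sort (· ≤ ·) ∈ D ∧ (X.sort (· ≤ ·)).reverse ∈ D ∧
    PathIn D (X.sort (· ≤ ·)) (X.sort (· ≤ ·)).reverse

/-- `A` is an ideal of the order `σ`: a downward-closed (w.r.t. `<_σ`) set of
alternatives of `σ`, i.e. an initial segment of the word `σ`. -/
def IsIdeal (σ : List ℕ) (A : Set ℕ) : Prop :=
  (∀ x ∈ A, x ∈ σ) ∧ ∀ x ∈ A, ∀ y ∈ σ, ltIn σ y x → y ∈ A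

/-- The set system of all ideals of `σ`. -/
def IdSet (σ : List ℕ) : Set (Set ℕ) := {A | IsIdeal σ A}

/-- The convex hull of a set of naturals: the minimal integer interval containing it. -/
def hull (S : Set ℕ) : Set ℕ := {x | ∃ a ∈ S, ∃ b ∈ S, a ≤ x ∧ x ≤ b}

/-- `A` and `B` are separated: the convex hulls of `A \ B` and `B \ A` are disjoint. -/
def Separated (A B : Set ℕ) : Prop := Disjoint (hull (A \ B)) (hull (B \ A))

/-- A separated set system: any two members are separated. -/
def SepSystem (𝒳 : Set (Set ℕ)) : Prop := ∀ A ∈ 𝒳, ∀ B ∈ 𝒳, Separated A B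

/-- The concatenation `σ * τ` of a word on `[n]` with a word on `[n']`, the latter
shifted by `n`. -/
def concatWord (n : ℕ) (σ τ : List ℕ) : List ℕ := σ ++ τ.map (· + n)

/-- The concatenation `{σ * τ : σ ∈ D, τ ∈ D'}` of two domains. -/
def ConcatDomain (n : ℕ) (D D' : Set (List ℕ)) : Set (List ℕ) :=
  {l | ∃ σ ∈ D, ∃ τ ∈ D', l = concatWord n σ τ}

/-- The simple-majority relation `i sm(ν) j` for an opinion `ν` on the finite domain `D`. -/
def SM (D : Finset (List ℕ)) (ν : List ℕ → ℕ) (i j : ℕ) : Prop :=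
  (∑ σ ∈ D, if ltIn σ j i then ν σ else 0) > (∑ σ ∈ D, if ltIn σ i j then ν σ else 0)

/-- Fishburn's domain (the alternating scheme): for each triple `i<j<k`, if `j` is
even then `j` is not the worst of `{i,j,k}`, and if `j` is odd then `j` is not the best. -/
def Fishburn (n : ℕ) : Set (List ℕ) :=
  {σ | σ ∈ LinWords n ∧ ∀ i j k : ℕ, 1 ≤ i → i < j → j < k → k ≤ n →
    (Even j → ¬ (ltIn σ j i ∧ ltIn σ j k)) ∧ (Odd j → ¬ (ltIn σ i j ∧ ltIn σ k j))}

/-- `γ n`: the maximum cardinality of a peak-pit domain in `L([n])`. -/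
noncomputable def gamma (n : ℕ) : ℕ :=
  sSup {m | ∃ D : Set (List ℕ), D ⊆ LinWords n ∧ IsPeakPit n D ∧ D.ncard = m}


lemma linWords_finite (n : ℕ) : (LinWords n).Finite := by
  have h : LinWords n = {l | l ∈ (List.range' 1 n).permutations} := by
    ext l; simp [LinWords, List.mem_permutations]
  rw [h]; exact (List.range' 1 n).permutations.finite_toSet

lemma mem_linWords {n : ℕ} {σ : List ℕ} (h : σ ∈ LinWords n) {x : ℕ} :
    x ∈ σ ↔ 1 ≤ x ∧ x ≤ n := by
  rw [List.Perm.mem_iff h, List.mem_range'_1]; omega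

lemma length_linWords {n : ℕ} {σ : List ℕ} (h : σ ∈ LinWords n) : σ.length = n := by
  simpa using List.Perm.length_eq h

lemma indexOf_map_add (m : ℕ) (l : List ℕ) (a : ℕ) :
    (l.map (· + m)).idxOf (a + m) = l.idxOf a := by
  induction l with
  | nil => simp
  | cons x xs ih =>
    by_cases hx : x = a
    · simp [hx, List.idxOf_cons]
    · have : ¬ (x + m = a + m) := by omega
      simp [List.idxOf_cons, ih, hx, this]

lemma concat_mem {n n' : ℕ} {σ τ : List ℕ} (hσ : σ ∈ LinWords n) (hτ : τ ∈ LinWords n') :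
    concatWord n σ τ ∈ LinWords (n + n') := by
  have hmap : τ.map (· + n) = τ.map (n + ·) := by
    apply List.map_congr_left; intro a _; omega
  have h2 : (τ.map (· + n)).Perm (List.range' (n + 1) n') := by
    rw [hmap, ← List.map_add_range' (a := n) 1 n' 1]
    exact List.Perm.map _ hτ
  have happ : List.range' 1 n ++ List.range' (n + 1) n' = List.range' 1 (n + n') := by
    have := List.range'_append (s := 1) (m := n) (n := n') (step := 1)
    simpa [add_comm, one_mul] using this
  have := List.Perm.append hσ h2
  rw [happ] at this
  exact this

lemma ltIn_concat_left {n : ℕ} {σ τ : List ℕ} {a b : ℕ} (ha : a ∈ σ) (hb : b ∈ σ) :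
    ltIn (concatWord n σ τ) a b ↔ ltIn σ a b := by
  unfold ltIn concatWord
  rw [List.idxOf_append_of_mem ha, List.idxOf_append_of_mem hb]

lemma ltIn_concat_right {n : ℕ} {σ τ : List ℕ} {a b : ℕ}
    (ha : a + n ∉ σ) (hb : b + n ∉ σ) :
    ltIn (concatWord n σ τ) (a + n) (b + n) ↔ ltIn τ a b := by
  unfold ltIn concatWord
  rw [List.idxOf_append_of_notMem ha, List.idxOf_append_of_notMem hb,
    indexOf_map_add, indexOf_map_add]
  omega

lemma not_ltIn_concat {n : ℕ} {σ τ : List ℕ} {a b : ℕ} (ha : a ∈ σ) (hb : b ∉ σ) :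
    ¬ ltIn (concatWord n σ τ) b a := by
  unfold ltIn concatWord
  rw [List.idxOf_append_of_mem ha, List.idxOf_append_of_notMem hb]
  have := List.idxOf_lt_length_iff.mpr ha
  omega

lemma concat_peakpit {n n' : ℕ} {D D' : Set (List ℕ)}
    (hD1 : D ⊆ LinWords n) (hD2 : IsPeakPit n D)
    (hD1' : D' ⊆ LinWords n') (hD2' : IsPeakPit n' D') :
    IsPeakPit (n + n') (ConcatDomain n D D') := by
  intro i j k hi hij hjk hk
  rcases le_or_gt k n with hkn | hkn
  · -- triple inside σ
    rcases hD2 i j k hi hij hjk hkn with h | h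
    · left; rintro π ⟨σ, hσ, τ, hτ, rfl⟩
      have hiσ : i ∈ σ := (mem_linWords (hD1 hσ)).2 ⟨hi, by omega⟩
      have hjσ : j ∈ σ := (mem_linWords (hD1 hσ)).2 ⟨by omega, by omega⟩
      have hkσ : k ∈ σ := (mem_linWords (hD1 hσ)).2 ⟨by omega, hkn⟩
      rw [ltIn_concat_left hjσ hiσ, ltIn_concat_left hjσ hkσ]
      exact h σ hσ
    · right; rintro π ⟨σ, hσ, τ, hτ, rfl⟩
      have hiσ : i ∈ σ := (mem_linWords (hD1 hσ)).2 ⟨hi, by omega⟩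
      have hjσ : j ∈ σ := (mem_linWords (hD1 hσ)).2 ⟨by omega, by omega⟩
      have hkσ : k ∈ σ := (mem_linWords (hD1 hσ)).2 ⟨by omega, hkn⟩
      rw [ltIn_concat_left hiσ hjσ, ltIn_concat_left hkσ hjσ]
      exact h σ hσ
  · rcases le_or_gt j n with hjn | hjn
    · -- j ∈ σ, k ∉ σ: pit
      right; rintro π ⟨σ, hσ, τ, hτ, rfl⟩
      have hjσ : j ∈ σ := (mem_linWords (hD1 hσ)).2 ⟨by omega, hjn⟩
      have hkσ : k ∉ σ := fun h => by have := (mem_linWords (hD1 hσ)).1 h; omega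
      exact fun h => not_ltIn_concat hjσ hkσ h.2
    · rcases le_or_gt i n with hin | hin
      · -- i ∈ σ, j ∉ σ: peak
        left; rintro π ⟨σ, hσ, τ, hτ, rfl⟩
        have hiσ : i ∈ σ := (mem_linWords (hD1 hσ)).2 ⟨hi, hin⟩
        have hjσ : j ∉ σ := fun h => by have := (mem_linWords (hD1 hσ)).1 h; omega
        exact fun h => not_ltIn_concat hiσ hjσ h.1
      · -- triple inside τ
        have key : ∀ a b : ℕ, n < a → a ≤ n + n' → n < b → b ≤ n + n' →
            ∀ σ ∈ D, ∀ τ ∈ D', (ltIn (concatWord n σ τ) a b ↔ ltIn τ (a - n) (b - n)) := by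
          intro a b ha1 ha2 hb1 hb2 σ hσ τ hτ
          have haσ : a - n + n ∉ σ := fun h => by
            have := (mem_linWords (hD1 hσ)).1 h; omega
          have hbσ : b - n + n ∉ σ := fun h => by
            have := (mem_linWords (hD1 hσ)).1 h; omega
          have ha' : a - n + n = a := by omega
          have hb' : b - n + n = b := by omega
          rw [← ha', ← hb', ltIn_concat_right haσ hbσ, Nat.add_sub_cancel, Nat.add_sub_cancel]
        rcases hD2' (i - n) (j - n) (k - n) (by omega) (by omega) (by omega) (by omega)
          with h | h
        · left; rintro π ⟨σ, hσ, τ, hτ, rfl⟩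
          rw [key j i (by omega) (by omega) (by omega) (by omega) σ hσ τ hτ,
            key j k (by omega) (by omega) hkn hk σ hσ τ hτ]
          exact h τ hτ
        · right; rintro π ⟨σ, hσ, τ, hτ, rfl⟩
          rw [key i j hin (by omega) (by omega) (by omega) σ hσ τ hτ,
            key k j hkn hk (by omega) (by omega) σ hσ τ hτ]
          exact h τ hτ

lemma concat_ncard {n n' : ℕ} {D D' : Set (List ℕ)}
    (hD1 : D ⊆ LinWords n) (hD1' : D' ⊆ LinWords n') :
    (ConcatDomain n D D').ncard = D.ncard * D'.ncard := by
  have hE : ConcatDomain n D D' =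
      (fun p : List ℕ × List ℕ => concatWord n p.1 p.2) '' (D ×ˢ D') := by
    ext l
    constructor
    · rintro ⟨σ, hσ, τ, hτ, rfl⟩; exact ⟨(σ, τ), ⟨hσ, hτ⟩, rfl⟩
    · rintro ⟨⟨σ, τ⟩, ⟨hσ, hτ⟩, rfl⟩; exact ⟨σ, hσ, τ, hτ, rfl⟩
  have hinj : Set.InjOn (fun p : List ℕ × List ℕ => concatWord n p.1 p.2) (D ×ˢ D') := by
    rintro ⟨σ, τ⟩ ⟨hσ, hτ⟩ ⟨σ', τ'⟩ ⟨hσ', hτ'⟩ heq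
    simp only [concatWord] at heq
    have hlen : σ.length = σ'.length := by
      rw [length_linWords (hD1 hσ), length_linWords (hD1 hσ')]
    obtain ⟨h1, h2⟩ := List.append_inj heq hlen
    have h3 : τ = τ' := by
      have : Function.Injective (· + n : ℕ → ℕ) := fun a b h => by simpa using h
      exact List.map_injective_iff.2 this h2
    simp [h1, h3]
  rw [hE, Set.ncard_image_of_injOn hinj, ← Nat.card_coe_set_eq,
    Nat.card_congr (Equiv.Set.prod D D'), Nat.card_prod,
    Nat.card_coe_set_eq, Nat.card_coe_set_eq]

lemma gammaSet_bddAbove (n : ℕ) :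
    BddAbove {m | ∃ D : Set (List ℕ), D ⊆ LinWords n ∧ IsPeakPit n D ∧ D.ncard = m} := by
  refine ⟨(LinWords n).ncard, ?_⟩
  rintro m ⟨D, hD1, _, rfl⟩
  exact Set.ncard_le_ncard hD1 (linWords_finite n)

lemma gammaSet_nonempty (n : ℕ) :
    {m | ∃ D : Set (List ℕ), D ⊆ LinWords n ∧ IsPeakPit n D ∧ D.ncard = m}.Nonempty :=
  ⟨0, ∅, Set.empty_subset _, fun _ _ _ _ _ _ _ => Or.inl (fun σ hσ => absurd hσ (by simp)),
    Set.ncard_empty _⟩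

lemma gamma_mem (n : ℕ) :
    ∃ D : Set (List ℕ), D ⊆ LinWords n ∧ IsPeakPit n D ∧ D.ncard = gamma n :=
  Nat.sSup_mem (gammaSet_nonempty n) (gammaSet_bddAbove n)

/-- `γ_n · γ_{n'} ≤ γ_{n+n'}` for the maximum sizes of peak-pit domains. -/
theorem statement_13 (n n' : ℕ) (hn : 1 ≤ n) (hn' : 1 ≤ n') :
    gamma n * gamma n' ≤ gamma (n + n') := by
  obtain ⟨D, hD1, hD2, hD3⟩ := gamma_mem n
  obtain ⟨D', hD1', hD2', hD3'⟩ := gamma_mem n'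
  have hmem : gamma n * gamma n' ∈
      {m | ∃ E : Set (List ℕ), E ⊆ LinWords (n + n') ∧ IsPeakPit (n + n') E ∧ E.ncard = m} := by
    refine ⟨ConcatDomain n D D', ?_, concat_peakpit hD1 hD2 hD1' hD2', ?_⟩
    · rintro l ⟨σ, hσ, τ, hτ, rfl⟩
      exact concat_mem (hD1 hσ) (hD1' hτ)
    · rw [concat_ncard hD1 hD1', hD3, hD3']
  exact le_csSup (gammaSet_bddAbove (n + n')) hmem
end

section
/- For every n, Fishburn's domain F_n (the set of linear orders defined by the alternating scheme) contains the orders α = 1<2<...<n and ω = n<...<2<1, is a peak-pit domain, and in particular is a Condorcet domain (acyclic). -/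
section AuxStatement14

lemma indexOf_range'_aux : ∀ (n s x : ℕ), s ≤ x → x < s + n →
    (List.range' s n).idxOf x = x - s := by
  intro n
  induction n with
  | zero => intro s x h1 h2; omega
  | succ m ih =>
    intro s x h1 h2
    rw [List.range'_succ]
    rcases eq_or_ne x s with rfl | hne
    · simp
    · rw [List.idxOf_cons_ne _ (Ne.symm hne), ih (s+1) x (by omega) (by omega)]
      omega

lemma indexOf_range'_rev_aux : ∀ (n s x : ℕ), s ≤ x → x < s + n →
    (List.range' s n).reverse.idxOf x = s + n - 1 - x := by
  intro n
  induction n with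
  | zero => intro s x h1 h2; omega
  | succ m ih =>
    intro s x h1 h2
    rw [List.range'_1_concat, List.reverse_append]
    simp only [List.reverse_singleton, List.singleton_append]
    rcases eq_or_ne x (s + m) with rfl | hne
    · simp
    · rw [List.idxOf_cons_ne _ (Ne.symm hne), ih s x h1 (by omega)]
      omega

lemma ltIn_trans_aux {σ : List ℕ} {a b c : ℕ} (h1 : ltIn σ a b) (h2 : ltIn σ b c) :
    ltIn σ a c := Nat.lt_trans h1 h2

lemma mem_of_ltIn_aux {σ : List ℕ} {a b : ℕ} (h : ltIn σ a b) : a ∈ σ :=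
  List.idxOf_lt_length_iff.mp (lt_of_lt_of_le h List.idxOf_le_length)

lemma cyclic_rot_aux {D : Set (List ℕ)} {i j k : ℕ} (h : CyclicTriple D i j k) :
    CyclicTriple D j k i := by
  obtain ⟨σ₁, h₁, σ₂, h₂, σ₃, h₃, a, b, c⟩ := h
  exact ⟨σ₂, h₂, σ₃, h₃, σ₁, h₁, b, c, a⟩

lemma cyclic_wb_aux {D : Set (List ℕ)} {i j k : ℕ} (h : CyclicTriple D i j k) :
    (∃ σ ∈ D, ltIn σ j i ∧ ltIn σ j k) ∧ (∃ σ ∈ D, ltIn σ i j ∧ ltIn σ k j) := by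
  obtain ⟨σ₁, h₁, σ₂, h₂, σ₃, h₃, ⟨a1, a2⟩, ⟨b1, b2⟩, ⟨c1, c2⟩⟩ := h
  exact ⟨⟨σ₂, h₂, ltIn_trans_aux b1 b2, b1⟩, ⟨σ₃, h₃, c2, ltIn_trans_aux c1 c2⟩⟩

lemma peakpit_acyclic_aux {n : ℕ} {D : Set (List ℕ)} (hD : D ⊆ LinWords n)
    (hpp : IsPeakPit n D) : ¬ IsCyclicDom D := by
  rintro ⟨i, j, k, hij, hjk, hik, h⟩
  have main : ∀ a b c : ℕ, (CyclicTriple D a b c ∨ CyclicTriple D c b a) →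
      (∃ σ ∈ D, ltIn σ b a ∧ ltIn σ b c) ∧ (∃ σ ∈ D, ltIn σ a b ∧ ltIn σ c b) := by
    rintro a b c (h' | h')
    · exact cyclic_wb_aux h'
    · obtain ⟨⟨σ, hσ, w1, w2⟩, ⟨τ, hτ, b1, b2⟩⟩ := cyclic_wb_aux h'
      exact ⟨⟨σ, hσ, w2, w1⟩, ⟨τ, hτ, b2, b1⟩⟩
  have Hj := main i j k h
  have Hi := main k i j (h.imp (fun t => cyclic_rot_aux (cyclic_rot_aux t)) cyclic_rot_aux)
  have Hk := main j k i (h.imp cyclic_rot_aux (fun t => cyclic_rot_aux (cyclic_rot_aux t)))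
  have bound : ∀ x (σ : List ℕ), σ ∈ D → x ∈ σ → 1 ≤ x ∧ x ≤ n := by
    intro x σ hσ hx
    have : x ∈ List.range' 1 n := (hD hσ).mem_iff.mp hx
    rw [List.mem_range'_1] at this
    omega
  obtain ⟨⟨σj, hσj, wj1, wj2⟩, ⟨τj, hτj, bj1, bj2⟩⟩ := Hj
  obtain ⟨⟨σi, hσi, wi1, wi2⟩, ⟨τi, hτi, bi1, bi2⟩⟩ := Hi
  obtain ⟨⟨σk, hσk, wk1, wk2⟩, ⟨τk, hτk, bk1, bk2⟩⟩ := Hk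
  have hibd := bound i σi hσi (mem_of_ltIn_aux wi1)
  have hjbd := bound j σj hσj (mem_of_ltIn_aux wj1)
  have hkbd := bound k σk hσk (mem_of_ltIn_aux wk1)
  have contra : ∀ a b c : ℕ, 1 ≤ a → a < b → b < c → c ≤ n →
      (∃ σ ∈ D, ltIn σ b a ∧ ltIn σ b c) → (∃ σ ∈ D, ltIn σ a b ∧ ltIn σ c b) → False := by
    rintro a b c h1 h2 h3 h4 ⟨σ, hσ, hw⟩ ⟨τ, hτ, hb⟩
    rcases hpp a b c h1 h2 h3 h4 with hp | hp
    · exact hp σ hσ hw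
    · exact hp τ hτ hb
  rcases lt_trichotomy i j with h1 | h1 | h1 <;> rcases lt_trichotomy j k with h2 | h2 | h2 <;>
    rcases lt_trichotomy i k with h3 | h3 | h3 <;> try omega
  · -- i < j < k : middle j
    exact contra i j k hibd.1 h1 h2 hkbd.2 ⟨σj, hσj, wj1, wj2⟩ ⟨τj, hτj, bj1, bj2⟩
  · -- i < k < j? cases: h1 : i<j, h2 : k<j, h3 : i<k : middle k
    exact contra i k j hibd.1 h3 h2 hjbd.2 ⟨σk, hσk, wk2, wk1⟩ ⟨τk, hτk, bk2, bk1⟩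
  · -- k < i < j : h1 : i<j, h2 : k<j, h3 : k<i : middle i
    exact contra k i j hkbd.1 h3 h1 hjbd.2 ⟨σi, hσi, wi1, wi2⟩ ⟨τi, hτi, bi1, bi2⟩
  · -- j < i < k : h1 : j<i, h2 : j<k, h3 : i<k : middle i
    exact contra j i k hjbd.1 h1 h3 hkbd.2 ⟨σi, hσi, wi2, wi1⟩ ⟨τi, hτi, bi2, bi1⟩
  · -- j < k < i : h1 : j<i, h2 : j<k, h3 : k<i : middle k
    exact contra j k i hjbd.1 h2 h3 hibd.2 ⟨σk, hσk, wk1, wk2⟩ ⟨τk, hτk, bk1, bk2⟩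
  · -- k < j < i : h1 : j<i, h2 : k<j, h3 : k<i : middle j
    exact contra k j i hkbd.1 h2 h1 hibd.2 ⟨σj, hσj, wj2, wj1⟩ ⟨τj, hτj, bj2, bj1⟩

end AuxStatement14

/-- Fishburn's domain contains `α` and `ω`, is a peak-pit domain, and
in particular is a Condorcet domain (acyclic). -/
theorem statement_14 (n : ℕ) :
    List.range' 1 n ∈ Fishburn n ∧ (List.range' 1 n).reverse ∈ Fishburn n ∧
    IsPeakPit n (Fishburn n) ∧ ¬ IsCyclicDom (Fishburn n) := by
  have halpha : List.range' 1 n ∈ Fishburn n := by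
    refine ⟨List.Perm.refl _, ?_⟩
    intro i j k h1 h2 h3 h4
    constructor
    · rintro _ ⟨hji, -⟩
      unfold ltIn at hji
      rw [indexOf_range'_aux n 1 j (by omega) (by omega),
        indexOf_range'_aux n 1 i (by omega) (by omega)] at hji
      omega
    · rintro _ ⟨-, hkj⟩
      unfold ltIn at hkj
      rw [indexOf_range'_aux n 1 k (by omega) (by omega),
        indexOf_range'_aux n 1 j (by omega) (by omega)] at hkj
      omega
  have homega : (List.range' 1 n).reverse ∈ Fishburn n := by
    refine ⟨List.reverse_perm _, ?_⟩
    intro i j k h1 h2 h3 h4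
    constructor
    · rintro _ ⟨-, hjk⟩
      unfold ltIn at hjk
      rw [indexOf_range'_rev_aux n 1 j (by omega) (by omega),
        indexOf_range'_rev_aux n 1 k (by omega) (by omega)] at hjk
      omega
    · rintro _ ⟨hij, -⟩
      unfold ltIn at hij
      rw [indexOf_range'_rev_aux n 1 i (by omega) (by omega),
        indexOf_range'_rev_aux n 1 j (by omega) (by omega)] at hij
      omega
  have hpp : IsPeakPit n (Fishburn n) := by
    intro i j k h1 h2 h3 h4
    rcases Nat.even_or_odd j with he | ho
    · exact Or.inl (fun σ hσ => (hσ.2 i j k h1 h2 h3 h4).1 he)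
    · exact Or.inr (fun σ hσ => (hσ.2 i j k h1 h2 h3 h4).2 ho)
  exact ⟨halpha, homega, hpp, peakpit_acyclic_aux (fun σ hσ => hσ.1) hpp⟩
end

section
/- Every connected Condorcet domain is a peak-pit domain: if D ⊆ L([n]) is a Condorcet domain containing α and ω such that the subgraph of the Bruhat graph induced on D is connected, then for every triple i<j<k, D satisfies the peak condition or the pit condition. -/
section Aux

lemma ltIn_asymm {σ : List ℕ} {x y : ℕ} (h : ltIn σ x y) : ¬ ltIn σ y x :=
  by unfold ltIn at *; exact Nat.lt_asymm h

lemma ltIn_total {σ : List ℕ} {x y : ℕ} (hx : x ∈ σ) (hy : y ∈ σ) (hxy : x ≠ y) :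
    ltIn σ x y ∨ ltIn σ y x := by
  rcases Nat.lt_trichotomy (σ.idxOf x) (σ.idxOf y) with h | h | h
  · exact Or.inl h
  · exfalso
    apply hxy
    have hx' := List.idxOf_lt_length_iff.mpr hx
    have hy' := List.idxOf_lt_length_iff.mpr hy
    calc x = σ[σ.idxOf x] := (List.getElem_idxOf hx').symm
      _ = σ[σ.idxOf y] := by congr 1
      _ = y := List.getElem_idxOf hy'
  · exact Or.inr h

lemma mem_invPairs {σ : List ℕ} {x y : ℕ} (hx : x ∈ σ) (hy : y ∈ σ) (hxy : x < y) :
    (x, y) ∈ InvPairs σ ↔ ltIn σ y x := by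
  simp [InvPairs, hx, hy, hxy]

lemma not_bruhatAdj {σ τ : List ℕ} {p q : ℕ × ℕ} (hpq : p ≠ q)
    (hp : p ∉ InvPairs σ) (hq : q ∉ InvPairs σ)
    (hp' : p ∈ InvPairs τ) (hq' : q ∈ InvPairs τ) : ¬ BruhatAdj σ τ := by
  rintro (⟨r, hr, he⟩ | ⟨r, hr, he⟩)
  · rw [he] at hp' hq'
    rcases Set.mem_insert_iff.mp hp' with h | h
    · rcases Set.mem_insert_iff.mp hq' with h' | h'
      · exact hpq (h.trans h'.symm)
      · exact hq h'
    · exact hp h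
  · rw [he] at hp
    exact hp (Set.mem_insert_of_mem _ hp')

lemma bruhatAdj_symm {σ τ : List ℕ} (h : BruhatAdj σ τ) : BruhatAdj τ σ := h.symm

lemma indexOf_range' : ∀ (m s x : ℕ), s ≤ x → x < s + m → (List.range' s m).idxOf x = x - s
  | 0, s, x, h1, h2 => by omega
  | (m + 1), s, x, h1, h2 => by
    rw [List.range'_succ]
    by_cases h : x = s
    · subst h; simp
    · rw [List.idxOf_cons_ne _ (fun hc => h hc.symm),
        indexOf_range' m (s + 1) x (by omega) (by omega)]
      omega

lemma indexOf_reverse_range' : ∀ (m x : ℕ), 1 ≤ x → x ≤ m →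
    (List.range' 1 m).reverse.idxOf x = m - x
  | 0, x, h1, h2 => by omega
  | (m + 1), x, h1, h2 => by
    rw [List.range'_1_concat, List.reverse_append]
    simp only [List.reverse_cons, List.reverse_nil, List.nil_append, List.cons_append,
      List.nil_append]
    by_cases h : x = 1 + m
    · subst h; simp
    · rw [List.idxOf_cons_ne _ (fun hc => h hc.symm),
        indexOf_reverse_range' m x h1 (by omega)]
      omega

lemma ltIn_alpha {n x y : ℕ} (h1 : 1 ≤ x) (hxy : x < y) (h2 : y ≤ n) :
    ltIn (List.range' 1 n) x y := by
  unfold ltIn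
  rw [indexOf_range' n 1 x (by omega) (by omega), indexOf_range' n 1 y (by omega) (by omega)]
  omega

lemma ltIn_omega {n x y : ℕ} (h1 : 1 ≤ x) (hxy : x < y) (h2 : y ≤ n) :
    ltIn (List.range' 1 n).reverse y x := by
  unfold ltIn
  rw [indexOf_reverse_range' n x (by omega) (by omega),
    indexOf_reverse_range' n y (by omega) (by omega)]
  omega

lemma path_invariant {D : Set (List ℕ)} {σ τ : List ℕ} (hpath : PathIn D σ τ)
    (Q : List ℕ → Prop)
    (hstep : ∀ ρ ∈ D, ∀ ρ' ∈ D, BruhatAdj ρ ρ' → Q ρ → Q ρ')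
    (h0 : Q σ) : Q τ := by
  obtain ⟨m, f, hf0, hfm, hmem, hadj⟩ := hpath
  have key : ∀ t, t ≤ m → Q (f t) := by
    intro t
    induction t with
    | zero => intro _; rw [hf0]; exact h0
    | succ t ih =>
      intro ht
      exact hstep (f t) (hmem t (by omega)) (f (t + 1)) (hmem (t + 1) ht)
        (hadj t (by omega)) (ih (by omega))
  rw [← hfm]; exact key m le_rfl

end Aux

/-- every connected Condorcet domain (containing `α` and `ω`, and
inducing a connected subgraph of the Bruhat graph) is a peak-pit domain. -/

theorem statement_16 (n : ℕ) (D : Set (List ℕ)) (hD : D ⊆ LinWords n)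
    (hα : List.range' 1 n ∈ D) (hω : (List.range' 1 n).reverse ∈ D)
    (hCD : ¬ IsCyclicDom D)
    (hconn : ∀ σ ∈ D, ∀ τ ∈ D, PathIn D σ τ) :
    IsPeakPit n D := by
  intro i j k h1i hij hjk hkn
  by_contra hcon
  push_neg at hcon
  obtain ⟨hnp, hnq⟩ := hcon
  simp only [PeakCond, PitCond, not_forall] at hnp hnq
  obtain ⟨σ₁, hσ₁D, hσ₁⟩ := hnp
  obtain ⟨σ₂, hσ₂D, hσ₂⟩ := hnq
  rw [not_not] at hσ₁ hσ₂
  -- basic facts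
  have hmemD : ∀ σ ∈ D, ∀ x, 1 ≤ x → x ≤ n → x ∈ σ := by
    intro σ hσ x hx1 hx2
    have hperm : σ.Perm (List.range' 1 n) := hD hσ
    rw [hperm.mem_iff, List.mem_range']
    exact ⟨x - 1, by omega, by omega⟩
  have hik : i < k := hij.trans hjk
  have hiσ : ∀ σ ∈ D, i ∈ σ := fun σ hσ => hmemD σ hσ i h1i (by omega)
  have hjσ : ∀ σ ∈ D, j ∈ σ := fun σ hσ => hmemD σ hσ j (by omega) (by omega)
  have hkσ : ∀ σ ∈ D, k ∈ σ := fun σ hσ => hmemD σ hσ k (by omega) hkn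
  have hαij : ltIn (List.range' 1 n) i j := ltIn_alpha h1i hij (by omega)
  have hαjk : ltIn (List.range' 1 n) j k := ltIn_alpha (by omega) hjk hkn
  have hωkj : ltIn (List.range' 1 n).reverse k j := ltIn_omega (by omega) hjk hkn
  have hωji : ltIn (List.range' 1 n).reverse j i := ltIn_omega h1i hij (by omega)
  -- cyclicity producers
  have hcyc1 : ∀ ρ ∈ D, ∀ ρ' ∈ D, (ltIn ρ j k ∧ ltIn ρ k i) → (ltIn ρ' k i ∧ ltIn ρ' i j) →
      False := by
    intro ρ hρ ρ' hρ' h3 h5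
    exact hCD ⟨i, j, k, by omega, by omega, by omega,
      Or.inl ⟨_, hα, ρ, hρ, ρ', hρ', ⟨hαij, hαjk⟩, h3, h5⟩⟩
  have hcyc2 : ∀ ρ ∈ D, ∀ ρ' ∈ D, (ltIn ρ j i ∧ ltIn ρ i k) → (ltIn ρ' i k ∧ ltIn ρ' k j) →
      False := by
    intro ρ hρ ρ' hρ' h2 h6
    exact hCD ⟨k, j, i, by omega, by omega, by omega,
      Or.inl ⟨_, hω, ρ, hρ, ρ', hρ', ⟨hωkj, hωji⟩, h2, h6⟩⟩
  -- determine the pattern of σ₁ and σ₂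
  rcases ltIn_total (hiσ σ₁ hσ₁D) (hkσ σ₁ hσ₁D) (by omega : i ≠ k) with h1ik | h1ki
  · -- σ₁ is jik (pattern P2)
    have hP2 : ltIn σ₁ j i ∧ ltIn σ₁ i k := ⟨hσ₁.1, h1ik⟩
    -- no order in D is ikj (P6)
    have hnoP6 : ∀ ρ ∈ D, ¬ (ltIn ρ i k ∧ ltIn ρ k j) := by
      intro ρ hρ h6
      exact hcyc2 σ₁ hσ₁D ρ hρ hP2 h6
    -- σ₂ is kij (P5)
    have h2ki : ltIn σ₂ k i := by
      rcases ltIn_total (hiσ σ₂ hσ₂D) (hkσ σ₂ hσ₂D) (by omega : i ≠ k) with h | h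
      · exact absurd ⟨h, hσ₂.2⟩ (hnoP6 σ₂ hσ₂D)
      · exact h
    -- no order in D is jki (P3)
    have hnoP3 : ∀ ρ ∈ D, ¬ (ltIn ρ j k ∧ ltIn ρ k i) := by
      intro ρ hρ h3
      exact hcyc1 ρ hρ σ₂ hσ₂D h3 ⟨h2ki, hσ₂.1⟩
    -- invariant along the path from σ₁ to σ₂ : k is best
    have := path_invariant (hconn σ₁ hσ₁D σ₂ hσ₂D)
      (fun ρ => ltIn ρ i k ∧ ltIn ρ j k)
      (by
        intro ρ hρ ρ' hρ' hadj hQ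
        rcases ltIn_total (hiσ ρ' hρ') (hkσ ρ' hρ') (by omega : i ≠ k) with hik' | hki'
        · rcases ltIn_total (hjσ ρ' hρ') (hkσ ρ' hρ') (by omega : j ≠ k) with hjk' | hkj'
          · exact ⟨hik', hjk'⟩
          · exact absurd ⟨hik', hkj'⟩ (hnoP6 ρ' hρ')
        · rcases ltIn_total (hjσ ρ' hρ') (hkσ ρ' hρ') (by omega : j ≠ k) with hjk' | hkj'
          · exact absurd ⟨hjk', hki'⟩ (hnoP3 ρ' hρ')
          · exfalso
            apply not_bruhatAdj (σ := ρ) (τ := ρ') (p := (i, k)) (q := (j, k))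
              (by simp; omega) _ _ _ _ hadj
            · rw [mem_invPairs (hiσ ρ hρ) (hkσ ρ hρ) hik]
              exact ltIn_asymm hQ.1
            · rw [mem_invPairs (hjσ ρ hρ) (hkσ ρ hρ) hjk]
              exact ltIn_asymm hQ.2
            · rw [mem_invPairs (hiσ ρ' hρ') (hkσ ρ' hρ') hik]
              exact hki'
            · rw [mem_invPairs (hjσ ρ' hρ') (hkσ ρ' hρ') hjk]
              exact hkj')
      ⟨h1ik, by unfold ltIn at *; exact Nat.lt_trans hσ₁.1 h1ik⟩
    exact ltIn_asymm this.1 h2ki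
  · -- σ₁ is jki (pattern P3)
    have hP3 : ltIn σ₁ j k ∧ ltIn σ₁ k i := ⟨hσ₁.2, h1ki⟩
    -- no order in D is kij (P5)
    have hnoP5 : ∀ ρ ∈ D, ¬ (ltIn ρ k i ∧ ltIn ρ i j) := by
      intro ρ hρ h5
      exact hcyc1 σ₁ hσ₁D ρ hρ hP3 h5
    -- σ₂ is ikj (P6)
    have h2ik : ltIn σ₂ i k := by
      rcases ltIn_total (hiσ σ₂ hσ₂D) (hkσ σ₂ hσ₂D) (by omega : i ≠ k) with h | h
      · exact h
      · exact absurd ⟨h, hσ₂.1⟩ (hnoP5 σ₂ hσ₂D)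
    -- no order in D is jik (P2)
    have hnoP2 : ∀ ρ ∈ D, ¬ (ltIn ρ j i ∧ ltIn ρ i k) := by
      intro ρ hρ h2
      exact hcyc2 ρ hρ σ₂ hσ₂D h2 ⟨h2ik, hσ₂.2⟩
    -- invariant along the path from σ₁ to σ₂ : i is best
    have := path_invariant (hconn σ₁ hσ₁D σ₂ hσ₂D)
      (fun ρ => ltIn ρ j i ∧ ltIn ρ k i)
      (by
        intro ρ hρ ρ' hρ' hadj hQ
        rcases ltIn_total (hiσ ρ' hρ') (hjσ ρ' hρ') (by omega : i ≠ j) with hij' | hji'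
        · rcases ltIn_total (hiσ ρ' hρ') (hkσ ρ' hρ') (by omega : i ≠ k) with hik' | hki'
          · exfalso
            apply not_bruhatAdj (σ := ρ') (τ := ρ) (p := (i, j)) (q := (i, k))
              (by simp; omega) _ _ _ _ (bruhatAdj_symm hadj)
            · rw [mem_invPairs (hiσ ρ' hρ') (hjσ ρ' hρ') hij]
              exact ltIn_asymm hij'
            · rw [mem_invPairs (hiσ ρ' hρ') (hkσ ρ' hρ') hik]
              exact ltIn_asymm hik'
            · rw [mem_invPairs (hiσ ρ hρ) (hjσ ρ hρ) hij]
              exact hQ.1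
            · rw [mem_invPairs (hiσ ρ hρ) (hkσ ρ hρ) hik]
              exact hQ.2
          · exact absurd ⟨hki', hij'⟩ (hnoP5 ρ' hρ')
        · rcases ltIn_total (hiσ ρ' hρ') (hkσ ρ' hρ') (by omega : i ≠ k) with hik' | hki'
          · exact absurd ⟨hji', hik'⟩ (hnoP2 ρ' hρ')
          · exact ⟨hji', hki'⟩)
      ⟨by unfold ltIn at *; exact Nat.lt_trans hσ₁.2 h1ki, h1ki⟩
    exact ltIn_asymm this.2 h2ik
end
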